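/- arXiv:2407.14205 — 3 statements merged into one kernel-verified Lean document; each statement's English description precedes it below -/
import Mathlib

section
/- Let P be a filtered poset having a least element, R a unital commutative ring, and M an R-module. Then the constant functor M̲ : P^op → R-Mod with value M is lim-acyclic, i.e., H^k(P; M̲) = 0 for every k > 0. -/
open CategoryTheory CategoryTheory.Limits Opposite

/-- The limit functor on a functor category over a preadditive category is additive. -/
instance limAdditive {J C : Type*} [Category J] [Category C] [HasLimitsOfShape J C]
    [Preadditive C] [HasFiniteLimits C] : (lim (J := J) (C := C)).Additive :=
  Functor.additive_of_preserves_binary_products _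

/-- The higher limits `H^k(P; F)`: the value at `F : Pᵒᵖ ⥤ R-Mod` of the `k`-th right
derived functor of the limit functor `lim : (Pᵒᵖ ⥤ R-Mod) ⥤ R-Mod`. -/

noncomputable def higherLim (P : Type) [PartialOrder P] (R : Type) [CommRing R]
    [EnoughInjectives (Pᵒᵖ ⥤ ModuleCat R)] (k : ℕ) (F : Pᵒᵖ ⥤ ModuleCat R) :
    ModuleCat R :=
  ((lim (J := Pᵒᵖ) (C := ModuleCat R)).rightDerived k).obj F

namespace HLAux

variable {P : Type} [PartialOrder P] {R : Type} [CommRing R]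

/-- The least element gives a terminal object in `Pᵒᵖ`. -/
def isTerminalOp (b : P) (hb : ∀ p : P, b ≤ p) : IsTerminal (op b : Pᵒᵖ) :=
  IsTerminal.ofUniqueHom (fun X => (homOfLE (hb X.unop)).op)
    (fun X m => Subsingleton.elim _ _)

noncomputable def colimIsoEval (b : P) (hb : ∀ p : P, b ≤ p) :
    (colim : (Pᵒᵖ ⥤ ModuleCat.{0} R) ⥤ ModuleCat.{0} R) ≅ (evaluation Pᵒᵖ (ModuleCat.{0} R)).obj (op b) :=
  NatIso.ofComponents
    (fun F => colimit.isoColimitCocone ⟨_, colimitOfDiagramTerminal (isTerminalOp b hb) F⟩)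
    (by
      intro F G η
      apply colimit.hom_ext
      intro j
      rw [colimit.ι_map_assoc, colimit.isoColimitCocone_ι_hom,
        colimit.isoColimitCocone_ι_hom_assoc]
      exact (η.naturality _).symm)

instance : ((evaluation Pᵒᵖ (ModuleCat.{0} R)).obj (op b)).PreservesMonomorphisms where
  preserves f hf := by
    dsimp
    rw [NatTrans.mono_iff_mono_app] at hf
    exact hf _

lemma colimPreservesMono (b : P) (hb : ∀ p : P, b ≤ p) :
    (colim : (Pᵒᵖ ⥤ ModuleCat.{0} R) ⥤ ModuleCat.{0} R).PreservesMonomorphisms :=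
  Functor.preservesMonomorphisms.of_iso (colimIsoEval b hb).symm

lemma injective_const (b : P) (hb : ∀ p : P, b ≤ p) (X : ModuleCat.{0} R) [Injective X] :
    Injective ((Functor.const Pᵒᵖ).obj X) :=
  have := colimPreservesMono (R := R) b hb
  Injective.injective_of_adjoint colimConstAdj X

noncomputable def limConstIso (b : P) (hb : ∀ p : P, b ≤ p) (X : ModuleCat.{0} R) :
    lim.obj ((Functor.const Pᵒᵖ).obj X) ≅ X where
  hom := limit.π _ (op b)
  inv := limit.lift ((Functor.const Pᵒᵖ).obj X) ⟨X, { app := fun _ => 𝟙 X }⟩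
  hom_inv_id := by
    apply limit.hom_ext
    intro j
    have := limit.w ((Functor.const Pᵒᵖ).obj X) (isTerminalOp b hb |>.from j)
    simp only [Functor.const_obj_obj, Functor.const_obj_map, Category.comp_id] at this
    simp [this]
  inv_hom_id := by simp

lemma limMap_const {X Y : ModuleCat.{0} R} (f : X ⟶ Y) (b : P) (hb : ∀ p : P, b ≤ p) :
    lim.map ((Functor.const Pᵒᵖ).map f) ≫ (limConstIso b hb Y).hom =
      (limConstIso b hb X).hom ≫ f := by
  simp [limConstIso]

end HLAux

open HLAux HomologicalComplex in
/-- If `P` is a filtered poset with a least element, then the constant functor with value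
an `R`-module `M` is `lim`-acyclic: `H^k(P; M̲) = 0` for `k > 0`. -/
theorem higherLim_const_isZero_of_least
    (P : Type) [PartialOrder P] (d : P → ℕ) (hd : StrictMono d)
    (b : P) (hb : ∀ p : P, b ≤ p)
    (R : Type) [CommRing R] [EnoughInjectives (Pᵒᵖ ⥤ ModuleCat R)]
    (M : Type) [AddCommGroup M] [Module R M]
    (k : ℕ) (hk : 0 < k) :
    IsZero (higherLim P R k ((Functor.const Pᵒᵖ).obj (ModuleCat.of R M))) := by
  unfold higherLim
  set Δ : ModuleCat.{0} R ⥤ (Pᵒᵖ ⥤ ModuleCat.{0} R) := Functor.const Pᵒᵖ with hΔ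
  haveI hfl : PreservesFiniteLimits Δ :=
    ⟨fun J _ _ => (colimConstAdj.rightAdjoint_preservesLimits).preservesLimitsOfShape⟩
  haveI hfc : PreservesFiniteColimits Δ :=
    ⟨fun J _ _ => (constLimAdj.leftAdjoint_preservesColimits).preservesColimitsOfShape⟩
  haveI : Δ.Additive := Functor.additive_of_preserves_binary_products _
  haveI : Δ.PreservesHomology := inferInstance
  let I := InjectiveResolution.of (ModuleCat.of R M)
  have quasi : QuasiIso ((Δ.mapHomologicalComplex (ComplexShape.up ℕ)).map I.ι) :=
    inferInstance
  let J : InjectiveResolution (Δ.obj (ModuleCat.of R M)) :=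
    { cocomplex := (Δ.mapHomologicalComplex (ComplexShape.up ℕ)).obj I.cocomplex
      injective := fun n => injective_const b hb _
      ι := (singleMapHomologicalComplex Δ (ComplexShape.up ℕ) 0).inv.app (ModuleCat.of R M) ≫
        (Δ.mapHomologicalComplex (ComplexShape.up ℕ)).map I.ι
      quasiIso := inferInstance }
  let e : ((lim (J := Pᵒᵖ) (C := ModuleCat.{0} R)).mapHomologicalComplex
      (ComplexShape.up ℕ)).obj J.cocomplex ≅ I.cocomplex :=
    Hom.isoOfComponents (fun n => limConstIso b hb _)
      (fun _ _ _ => (limMap_const _ b hb).symm)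
  refine IsZero.of_iso ?_ (J.isoRightDerivedObj lim k ≪≫
    (homologyFunctor (ModuleCat.{0} R) (ComplexShape.up ℕ) k).mapIso e)
  obtain ⟨k, rfl⟩ : ∃ n, k = n + 1 := ⟨k - 1, (Nat.succ_pred_eq_of_pos hk).symm⟩
  rw [homologyFunctor_obj, ← exactAt_iff_isZero_homology]
  exact I.cocomplex_exactAt_succ k
end

section
/- Let R be a unital commutative ring and f : C → D a truncatable morphism of cochain complexes of R-modules, i.e., C and D are bounded above and nonzero with heights satisfying h(C) < h(D), and the differential D^{h(D)−1} → D^{h(D)} is surjective. Then there exist a cochain complex E of R-modules with E^k = 0 for all k > h(D), a quasi-isomorphism i : C → E and a degreewise surjective morphism π : E → D such that π ∘ i = f. -/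
set_option maxHeartbeats 1000000
open CategoryTheory CategoryTheory.Limits

namespace TruncAux

variable {R : Type} [CommRing R]

/-- Transport an element of `D.X a` along a degree equality. -/
def tr (D : CochainComplex (ModuleCat R) ℤ) {a b : ℤ} (h : a = b) : D.X a →ₗ[R] D.X b := by
  subst h; exact LinearMap.id

@[simp] lemma tr_refl (D : CochainComplex (ModuleCat R) ℤ) {a : ℤ} (h : a = a) (x : D.X a) :
    tr D h x = x := rfl

@[simp] lemma tr_tr (D : CochainComplex (ModuleCat R) ℤ) {a b c : ℤ} (h1 : a = b) (h2 : b = c)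
    (x : D.X a) : tr D h2 (tr D h1 x) = tr D (h1.trans h2) x := by subst h1; subst h2; rfl

@[simp] lemma tr_d (D : CochainComplex (ModuleCat R) ℤ) {i a b : ℤ} (h : a = b) (x : D.X i) :
    tr D h (D.d i a x) = D.d i b x := by subst h; rfl

@[simp] lemma d_tr (D : CochainComplex (ModuleCat R) ℤ) {a b c : ℤ} (h : a = b) (x : D.X a) :
    D.d b c (tr D h x) = D.d a c x := by subst h; rfl

@[simp] lemma tr_zero (D : CochainComplex (ModuleCat R) ℤ) {a b : ℤ} (h : a = b) :
    tr D h (0 : D.X a) = 0 := map_zero _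

@[simp] lemma zeroHom_apply (M N : ModuleCat R) (x : M) : (0 : M ⟶ N) x = 0 := rfl

@[simp] lemma addHom_apply (M N : ModuleCat R) (f g : M ⟶ N) (x : M) :
    (f + g) x = f x + g x := rfl

@[simp] lemma compHom_apply (M N K : ModuleCat R) (f : M ⟶ N) (g : N ⟶ K) (x : M) :
    (f ≫ g) x = g (f x) := rfl

@[simp] lemma dd (D : CochainComplex (ModuleCat R) ℤ) (i j k : ℤ) (x : D.X i) :
    D.d j k (D.d i j x) = 0 := by
  have h : D.d i j ≫ D.d j k = 0 := D.d_comp_d i j k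
  calc D.d j k (D.d i j x) = (D.d i j ≫ D.d j k) x := rfl
    _ = (0 : D.X i ⟶ D.X k) x := by rw [h]
    _ = 0 := rfl

lemma elt_zero (M : ModuleCat R) (h : IsZero M) (x : M) : x = 0 := by
  have e : 𝟙 M = 0 := h.eq_of_src _ _
  calc x = (𝟙 M) x := rfl
    _ = (0 : M ⟶ M) x := by rw [e]
    _ = 0 := rfl

variable (C D : CochainComplex (ModuleCat R) ℤ) (hD : ℤ)

/-- Degreewise submodule of `C ⊕ path(D)` defining the truncated factorization complex. -/
def ES (k : ℤ) : Submodule R (C.X k × D.X (k-1) × D.X k) where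
  carrier := {p | (hD ≤ k → p.2.2 = D.d (k-1) k p.2.1) ∧ (hD < k → p.2.1 = 0)}
  add_mem' := fun ha hb =>
    ⟨fun h => by show _ + _ = _; rw [ha.1 h, hb.1 h]; simp,
     fun h => by show _ + _ = (0 : _); rw [ha.2 h, hb.2 h, add_zero]⟩
  zero_mem' := ⟨fun _ => by simp, fun _ => rfl⟩
  smul_mem' := fun r p hp =>
    ⟨fun h => by show r • _ = _; rw [hp.1 h]; simp,
     fun h => by show r • _ = (0 : _); rw [hp.2 h, smul_zero]⟩

/-- The differential of the complex `E`. -/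
def dE (k : ℤ) : (ES C D hD k) →ₗ[R] (ES C D hD (k+1)) where
  toFun p := ⟨(C.d k (k+1) p.1.1,
      tr D (show k = k+1-1 by ring) p.1.2.2 - D.d (k-1) (k+1-1) p.1.2.1,
      D.d k (k+1) p.1.2.2),
    ⟨fun _ => by simp, fun _ => by rw [p.2.1 (by omega)]; simp⟩⟩
  map_add' p q := by
    refine Subtype.ext (Prod.ext ?_ (Prod.ext ?_ ?_)) <;> simp [map_add] <;> abel
  map_smul' r p := by
    refine Subtype.ext (Prod.ext ?_ (Prod.ext ?_ ?_)) <;> simp [map_smul, smul_sub]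

@[simp] lemma dE_coe (k : ℤ) (p : ES C D hD k) :
    (dE C D hD k p).val = (C.d k (k+1) p.1.1,
      tr D (show k = k+1-1 by ring) p.1.2.2 - D.d (k-1) (k+1-1) p.1.2.1,
      D.d k (k+1) p.1.2.2) := rfl

/-- The complex `E` through which `f` factors. -/
def EE : CochainComplex (ModuleCat R) ℤ :=
  CochainComplex.of (fun k => ModuleCat.of R (ES C D hD k))
    (fun k => ModuleCat.ofHom (dE C D hD k))
    (fun k => by
      ext p : 2
      refine Subtype.ext (Prod.ext ?_ (Prod.ext ?_ ?_)) <;> simp [dd, map_sub])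

@[simp] lemma EEadd_val (n : ℤ) (x y : (EE C D hD).X n) :
    (x + y).val = x.val + y.val := rfl

lemma EE_d (k : ℤ) : (EE C D hD).d k (k+1) = ModuleCat.ofHom (dE C D hD k) :=
  CochainComplex.of_d (fun k => ModuleCat.of R (ES C D hD k)) (fun k => ModuleCat.ofHom (dE C D hD k)) k

lemma EE_d_fst (a b : ℤ) (h : a + 1 = b) (p : (EE C D hD).X a) :
    ((EE C D hD).d a b p).1.1 = C.d a b p.1.1 := by subst h; rw [EE_d]; rfl

lemma EE_d_snd (a b : ℤ) (h : a + 1 = b) (p : (EE C D hD).X a) :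
    ((EE C D hD).d a b p).1.2.1
      = tr D (show a = b - 1 by omega) p.1.2.2 - D.d (a-1) (b-1) p.1.2.1 := by
  subst h; rw [EE_d]; rfl

lemma EE_d_thd (a b : ℤ) (h : a + 1 = b) (p : (EE C D hD).X a) :
    ((EE C D hD).d a b p).1.2.2 = D.d a b p.1.2.2 := by subst h; rw [EE_d]; rfl

/-- Inclusion, as a linear map. -/
def iL (k : ℤ) : C.X k →ₗ[R] ES C D hD k where
  toFun c := ⟨(c, 0, 0), ⟨fun _ => by simp, fun _ => rfl⟩⟩
  map_add' a b := by refine Subtype.ext ?_; simp [Prod.ext_iff]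
  map_smul' r a := by refine Subtype.ext ?_; simp [Prod.ext_iff]

/-- Retraction, as a linear map. -/
def rL (k : ℤ) : (ES C D hD k) →ₗ[R] C.X k where
  toFun p := p.1.1
  map_add' _ _ := rfl
  map_smul' _ _ := rfl

/-- Projection to `D`, as a linear map. -/
def piL (f : C ⟶ D) (k : ℤ) : (ES C D hD k) →ₗ[R] D.X k where
  toFun p := f.f k p.1.1 + p.1.2.2
  map_add' a b := by simp; abel
  map_smul' r a := by simp

/-- The quasi-isomorphism `i : C ⟶ E`. -/
def iC : C ⟶ EE C D hD where
  f k := ModuleCat.ofHom (iL C D hD k)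
  comm' := by
    intro i j hij
    have hij' : i + 1 = j := hij
    subst hij'
    rw [EE_d]
    ext c
    refine Subtype.ext (Prod.ext ?_ (Prod.ext ?_ ?_))
    · show C.d i (i+1) c = C.d i (i+1) c
      rfl
    · show tr D (show i = i+1-1 by ring) (0 : D.X i) - D.d (i-1) (i+1-1) (0 : D.X (i-1)) = 0
      simp
    · show D.d i (i+1) (0 : D.X i) = 0
      simp

/-- The retraction `E ⟶ C`. -/
def rE : EE C D hD ⟶ C where
  f k := ModuleCat.ofHom (rL C D hD k)
  comm' := by
    intro i j hij
    have hij' : i + 1 = j := hij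
    subst hij'
    rw [EE_d]
    ext p
    rfl

/-- The degreewise-surjective projection `E ⟶ D`. -/
def piE (f : C ⟶ D) : EE C D hD ⟶ D where
  f k := ModuleCat.ofHom (piL C D hD f k)
  comm' := by
    intro i j hij
    have hij' : i + 1 = j := hij
    subst hij'
    rw [EE_d]
    ext p
    have hc : f.f (i+1) (C.d i (i+1) p.1.1) = D.d i (i+1) (f.f i p.1.1) := by
      calc f.f (i+1) (C.d i (i+1) p.1.1) = (C.d i (i+1) ≫ f.f (i+1)) p.1.1 := rfl
        _ = (f.f i ≫ D.d i (i+1)) p.1.1 := by rw [f.comm i (i+1)]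
        _ = D.d i (i+1) (f.f i p.1.1) := rfl
    show D.d i (i+1) (f.f i p.1.1 + p.1.2.2)
        = f.f (i+1) (C.d i (i+1) p.1.1) + D.d i (i+1) p.1.2.2
    rw [map_add, hc]

/-- The contracting-homotopy component. -/
def Hmap (n m : ℤ) (h : n - 1 = m) : (ES C D hD n) →ₗ[R] (ES C D hD m) where
  toFun p := ⟨(0, 0, tr D h p.1.2.1),
    ⟨fun _ => by rw [p.2.2 (by omega)]; simp, fun _ => rfl⟩⟩
  map_add' a b := by refine Subtype.ext ?_; simp [Prod.ext_iff]
  map_smul' r a := by refine Subtype.ext ?_; simp [Prod.ext_iff]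

/-- The homotopy `𝟙 E ≃ i ∘ r`. -/
def homot : Homotopy (𝟙 (EE C D hD)) (rE C D hD ≫ iC C D hD) where
  hom n m := if h : n = m + 1 then (show (EE C D hD).X n ⟶ (EE C D hD).X m from ModuleCat.ofHom (Hmap C D hD n m (by omega))) else 0
  zero i j hn := by
    have hn' : ¬ (j + 1 = i) := hn
    exact dif_neg (fun he => hn' (by omega))
  comm n := by
    rw [dNext_eq _ (show (ComplexShape.up ℤ).Rel n (n+1) from rfl),
        prevD_eq _ (show (ComplexShape.up ℤ).Rel (n-1) n from show n-1+1 = n by omega),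
        dif_pos rfl, dif_pos (show n = (n-1) + 1 by omega)]
    ext p
    have e1 := EE_d_fst C D hD (n-1) n (by omega)
    have e2 := EE_d_snd C D hD (n-1) n (by omega)
    have e3 := EE_d_thd C D hD (n-1) n (by omega)
    have e2' := EE_d_snd C D hD n (n+1) rfl
    simp only [HomologicalComplex.id_f, HomologicalComplex.comp_f, ModuleCat.id_apply]
    refine Subtype.ext (Prod.ext ?_ (Prod.ext ?_ ?_))
    · simp only [compHom_apply, ModuleCat.comp_apply, addHom_apply, EEadd_val, Prod.fst_add, e1]
      show p.val.1 = 0 + ((EE C D hD).d (n-1) n (Hmap C D hD n (n-1) (by omega) p)).val.1 + p.val.1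
      refine Eq.trans ?_ (congrArg (fun t => 0 + t + p.val.1) (e1 (Hmap C D hD n (n-1) (by omega) p)).symm)
      show p.val.1 = 0 + C.d (n-1) n 0 + p.val.1
      simp
    · simp only [compHom_apply, ModuleCat.comp_apply, addHom_apply, EEadd_val, Prod.fst_add, Prod.snd_add, e2]
      show p.val.2.1 = 0 + ((EE C D hD).d (n-1) n (Hmap C D hD n (n-1) (by omega) p)).val.2.1 + 0
      refine Eq.trans ?_ (congrArg (fun t => 0 + t + 0) (e2 (Hmap C D hD n (n-1) (by omega) p)).symm)
      show p.val.2.1 = 0 + (tr D (show n-1 = n-1 by omega)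
        (tr D (show n-1 = n-1 by omega) p.val.2.1) - D.d (n-1-1) (n-1) 0) + 0
      simp
    · simp only [compHom_apply, ModuleCat.comp_apply, addHom_apply, EEadd_val, Prod.fst_add, Prod.snd_add, e3]
      show p.val.2.2 = (Hmap C D hD (n+1) n (by omega) ((EE C D hD).d n (n+1) p)).val.2.2 + ((EE C D hD).d (n-1) n (Hmap C D hD n (n-1) (by omega) p)).val.2.2 + 0
      refine Eq.trans ?_ (congrArg (fun t => (Hmap C D hD (n+1) n (by omega) ((EE C D hD).d n (n+1) p)).val.2.2 + t + 0) (e3 (Hmap C D hD n (n-1) (by omega) p)).symm)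
      show p.val.2.2
        = tr D (show n+1-1 = n by omega) (((EE C D hD).d n (n+1)) p).val.2.1
          + D.d (n-1) n (tr D (show n-1 = n-1 by omega) p.val.2.1) + 0
      rw [e2' p]
      simp

/-- The homotopy equivalence between `C` and `E`. -/
def hoeq : HomotopyEquiv C (EE C D hD) where
  hom := iC C D hD
  inv := rE C D hD
  homotopyHomInvId := Homotopy.ofEq (by ext n c; rfl)
  homotopyInvHomId := (homot C D hD).symm

end TruncAux

open TruncAux in
/-- a truncatable morphism `f : C ⟶ D` of cochain complexes of `R`-modules
(heights `hC < hD`, last differential of `D` surjective) factors as a quasi-isomorphism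
followed by a degreewise surjection through a complex vanishing in degrees `> hD`. -/
theorem exists_factorisation_of_truncatable
    (R : Type) [CommRing R]
    (C D : CochainComplex (ModuleCat R) ℤ) (f : C ⟶ D)
    (hC hD : ℤ)
    (hCtop : ∀ k : ℤ, hC < k → IsZero (C.X k)) (hCne : ¬ IsZero (C.X hC))
    (hDtop : ∀ k : ℤ, hD < k → IsZero (D.X k)) (hDne : ¬ IsZero (D.X hD))
    (hlt : hC < hD)
    (hsurj : Function.Surjective (D.d (hD - 1) hD)) :
    ∃ (E : CochainComplex (ModuleCat R) ℤ) (i : C ⟶ E) (π : E ⟶ D),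
      (∀ k : ℤ, hD < k → IsZero (E.X k)) ∧ QuasiIso i ∧
      (∀ k : ℤ, Function.Surjective (π.f k)) ∧ i ≫ π = f := by
  refine ⟨EE C D hD, iC C D hD, piE C D hD f, ?_, ?_, ?_, ?_⟩
  · intro k hk
    have hz : ∀ p : ES C D hD k, p = 0 := by
      intro p
      refine Subtype.ext (Prod.ext ?_ (Prod.ext ?_ ?_))
      · exact elt_zero (C.X k) (hCtop k (hlt.trans hk)) _
      · exact p.2.2 hk
      · rw [p.2.1 (le_of_lt hk), p.2.2 hk, map_zero]; rfl
    exact @ModuleCat.isZero_of_subsingleton R _ (ModuleCat.of R (ES C D hD k))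
      ⟨fun a b => (hz a).trans (hz b).symm⟩
  · exact (inferInstance : QuasiIso (hoeq C D hD).hom)
  · intro k z
    rcases lt_trichotomy k hD with h | rfl | h
    · refine ⟨⟨(0, 0, z), ⟨fun hh => absurd hh (by omega), fun hh => absurd hh (by omega)⟩⟩, ?_⟩
      show f.f k 0 + z = z
      simp
    · obtain ⟨y, hy⟩ := hsurj z
      refine ⟨⟨(0, y, z), ⟨fun _ => hy.symm, fun hh => absurd hh (by omega)⟩⟩, ?_⟩
      show f.f k 0 + z = z
      simp
    · refine ⟨0, ?_⟩
      rw [elt_zero (D.X k) (hDtop k h) z]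
      simp
  · ext n c
    show f.f n c + 0 = f.f n c
    simp
end

section
/- Let P be a filtered tree, i.e., a filtered poset whose Hasse diagram contains no undirected cycles, and let R be a unital commutative ring. Then for every functor F : P^op → R-Mod and every k > 1, H^k(P; F) = 0. -/
open CategoryTheory CategoryTheory.Limits Opposite

universe v

noncomputable section TreeLim

variable (P : Type) [PartialOrder P] (R : Type) [CommRing R]

/-- covering pairs -/
abbrev Cov : Type := {p : P × P // p.1 ⋖ p.2}

/-- product of evaluations at all points -/
def Phi0 : (Pᵒᵖ ⥤ ModuleCat.{v} R) ⥤ ModuleCat.{v} R where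
  obj F := ModuleCat.of R (∀ x : P, F.obj (op x))
  map {F G} η := ModuleCat.ofHom (LinearMap.pi
    (fun x => (η.app (op x)).hom.comp (LinearMap.proj x)))
  map_id := by intros; apply ModuleCat.hom_ext; apply LinearMap.ext; intro s; rfl
  map_comp := by intros; apply ModuleCat.hom_ext; apply LinearMap.ext; intro s; rfl

/-- product of evaluations at lower ends of covering pairs -/
def Phi1 : (Pᵒᵖ ⥤ ModuleCat.{v} R) ⥤ ModuleCat.{v} R where
  obj F := ModuleCat.of R (∀ e : Cov P, F.obj (op e.1.1))
  map {F G} η := ModuleCat.ofHom (LinearMap.pi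
    (fun (e : Cov P) => (η.app (op e.1.1)).hom.comp (LinearMap.proj e)))
  map_id := by intros; apply ModuleCat.hom_ext; apply LinearMap.ext; intro s; rfl
  map_comp := by intros; apply ModuleCat.hom_ext; apply LinearMap.ext; intro s; rfl

@[simp] lemma Phi0_map_apply (F G : Pᵒᵖ ⥤ ModuleCat.{v} R) (η : F ⟶ G)
    (s : ∀ x : P, F.obj (op x)) (x : P) :
    (((Phi0 P R).map η) s : ∀ x : P, G.obj (op x)) x = η.app (op x) (s x) := rfl

@[simp] lemma Phi1_map_apply (F G : Pᵒᵖ ⥤ ModuleCat.{v} R) (η : F ⟶ G)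
    (s : ∀ e : Cov P, F.obj (op e.1.1)) (e : Cov P) :
    (((Phi1 P R).map η) s : ∀ e : Cov P, G.obj (op e.1.1)) e = η.app (op e.1.1) (s e) := rfl

/-- the difference map -/
def alphaApp (F : Pᵒᵖ ⥤ ModuleCat.{v} R) :
    (Phi0 P R).obj F ⟶ (Phi1 P R).obj F :=
  ModuleCat.ofHom (LinearMap.pi (fun e : Cov P =>
    (LinearMap.proj e.1.1 : (∀ x : P, F.obj (op x)) →ₗ[R] F.obj (op e.1.1)) -
      (F.map (homOfLE e.2.le).op).hom.comp
        (LinearMap.proj e.1.2)) :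
    (∀ x : P, F.obj (op x)) →ₗ[R] (∀ e : Cov P, F.obj (op e.1.1)))

@[simp] lemma alphaApp_apply (F : Pᵒᵖ ⥤ ModuleCat.{v} R) (s : ∀ x : P, F.obj (op x))
    (e : Cov P) :
    (alphaApp P R F s : ∀ e : Cov P, F.obj (op e.1.1)) e = s e.1.1 - F.map (homOfLE e.2.le).op (s e.1.2) := rfl

def alphaNat : (Phi0.{v} P R) ⟶ Phi1.{v} P R where
  app F := alphaApp P R F
  naturality {F G} η := by
    apply ModuleCat.hom_ext; apply LinearMap.ext; intro s
    funext e
    have := congrArg (fun (f : F.obj (op e.1.2) ⟶ G.obj (op e.1.1)) => f (s e.1.2))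
      (η.naturality ((homOfLE e.2.le).op))
    dsimp at this
    show alphaApp P R G ((Phi0 P R).map η s) e = (Phi1 P R).map η (alphaApp P R F s) e
    show η.app (op e.1.1) (s e.1.1) - G.map (homOfLE e.2.le).op (η.app (op e.1.2) (s e.1.2))
      = η.app (op e.1.1) (s e.1.1 - F.map (homOfLE e.2.le).op (s e.1.2))
    rw [map_sub, ← this]

def iotaApp (F : Pᵒᵖ ⥤ ModuleCat.{v} R) :
    (lim (J := Pᵒᵖ) (C := ModuleCat.{v} R)).obj F ⟶ (Phi0 P R).obj F :=
  ModuleCat.ofHom (LinearMap.pi (fun x : P => (limit.π F (op x)).hom) :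
    _ →ₗ[R] (∀ x : P, F.obj (op x)))

@[simp] lemma iotaApp_apply (F : Pᵒᵖ ⥤ ModuleCat.{v} R) (s) (x : P) :
    (iotaApp P R F s : ∀ x : P, F.obj (op x)) x = limit.π F (op x) s := rfl

def iotaNat : (lim (J := Pᵒᵖ) (C := ModuleCat.{v} R)) ⟶ Phi0.{v} P R where
  app F := iotaApp P R F
  naturality {F G} η := by
    apply ModuleCat.hom_ext; apply LinearMap.ext; intro s
    funext x
    have := congrArg (fun (f : limit F ⟶ G.obj (op x)) => f s) (limMap_π η (op x))
    dsimp at this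
    show iotaApp P R G (lim.map η s) x = (Phi0 P R).map η (iotaApp P R F s) x
    show limit.π G (op x) (lim.map η s) = η.app (op x) (limit.π F (op x) s)
    exact this

lemma iota_comp_alpha : iotaNat.{v} P R ≫ alphaNat P R = 0 := by
  apply NatTrans.ext
  funext F
  apply ModuleCat.hom_ext; apply LinearMap.ext; intro s
  funext e
  have := congrArg (fun (f : limit F ⟶ F.obj (op e.1.1)) => f s)
    (limit.w F ((homOfLE e.2.le).op))
  dsimp at this
  show alphaApp P R F (iotaApp P R F s) e = 0
  show limit.π F (op e.1.1) s - F.map (homOfLE e.2.le).op (limit.π F (op e.1.2) s) = 0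
  rw [sub_eq_zero, ← this]


section Chain

variable {P R}

lemma exists_le_covby {d : P → ℕ} (hd : StrictMono d) {x z : P} (h : x < z) :
    ∃ r, x ≤ r ∧ r ⋖ z := by
  set Q : ℕ → Prop := fun m => ∃ r, x ≤ r ∧ r < z ∧ d r = m with hQ
  have hQx : Q (d x) := ⟨x, le_rfl, h, rfl⟩
  have hdx : d x ≤ d z := (hd h).le
  classical
  obtain ⟨r, hxr, hrz, hdr⟩ := Nat.findGreatest_spec hdx hQx
  refine ⟨r, hxr, hrz, fun c h1 h2 => ?_⟩
  have : d c ≤ Nat.findGreatest Q (d z) :=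
    Nat.le_findGreatest (hd h2).le ⟨c, hxr.trans h1.le, h2, rfl⟩
  rw [← hdr] at this
  exact absurd this (not_le.mpr (hd h1))

lemma compat_of_alpha_zero {d : P → ℕ} (hd : StrictMono d)
    {F : Pᵒᵖ ⥤ ModuleCat.{v} R} {s : ∀ x : P, F.obj (op x)}
    (hs : alphaApp P R F s = 0) :
    ∀ (n : ℕ) {x z : P} (h : x ≤ z), d z - d x ≤ n →
      s x = F.map (homOfLE h).op (s z) := by
  have hs' : ∀ e : Cov P, s e.1.1 - F.map (homOfLE e.2.le).op (s e.1.2) = 0 := by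
    intro e
    have := congrFun hs e
    rwa [alphaApp_apply] at this
  intro n
  induction n with
  | zero =>
    intro x z h hn
    rcases h.lt_or_eq with h' | rfl
    · exact absurd hn (by have := hd h'; omega)
    · have : (homOfLE h).op = 𝟙 (op x) := Subsingleton.elim _ _
      rw [this, F.map_id]; rfl
  | succ n ih =>
    intro x z h hn
    rcases h.lt_or_eq with h' | rfl
    · obtain ⟨r, hxr, hrz⟩ := exists_le_covby hd h'
      have h1 : d r - d x ≤ n := by have := hd hrz.lt; have := hd h'; omega
      have hcov : s r = F.map (homOfLE hrz.le).op (s z) := by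
        have := hs' ⟨(r, z), hrz⟩
        rwa [sub_eq_zero] at this
      rw [ih hxr h1, hcov,
        Subsingleton.elim ((homOfLE h).op)
          ((homOfLE hrz.le).op ≫ (homOfLE hxr).op), F.map_comp]
      rfl
    · have : (homOfLE h).op = 𝟙 (op x) := Subsingleton.elim _ _
      rw [this, F.map_id]; rfl

lemma iotaApp_injective (F : Pᵒᵖ ⥤ ModuleCat.{v} R) :
    Function.Injective (iotaApp P R F) := by
  intro a b hab
  apply Concrete.limit_ext (F := F)
  intro j
  have := congrFun hab j.unop
  exact this

lemma alpha_ker_sub_range {d : P → ℕ} (hd : StrictMono d) (F : Pᵒᵖ ⥤ ModuleCat.{v} R)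
    (s : (Phi0 P R).obj F) (hs : alphaApp P R F s = 0) :
    ∃ t, iotaApp P R F t = s := by
  let c : Cone F :=
    { pt := ModuleCat.of R (ULift.{v} R)
      π :=
        { app := fun j => ModuleCat.ofHom ((LinearMap.toSpanSingleton R _
            ((s : ∀ x : P, F.obj (op x)) j.unop)).comp
            (ULift.moduleEquiv.toLinearMap) : _ →ₗ[R] _)
          naturality := by
            intro j j' f
            apply ModuleCat.hom_ext; apply LinearMap.ext; intro r
            have h : j'.unop ≤ j.unop := leOfHom f.unop
            have hcompat : s j'.unop = F.map (homOfLE h).op (s j.unop) :=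
              compat_of_alpha_zero hd hs _ h le_rfl
            show r.down • s j'.unop = F.map f (r.down • s j.unop)
            rw [Subsingleton.elim f ((homOfLE h).op), hcompat, map_smul] } }
  refine ⟨limit.lift F c (ULift.up 1), ?_⟩
  funext x
  rw [iotaApp_apply]
  have := congrArg (fun (f : c.pt ⟶ F.obj (op x)) => f (ULift.up 1)) (limit.lift_π c (op x))
  dsimp at this
  rw [this]
  show (1 : R) • s x = s x
  rw [one_smul]

end Chain


section Tree

variable {P}

/-- generators of the edge module over the upper set of `y` -/
abbrev covGen (y : P) (e : {e : Cov P // y ≤ e.1.1}) : {x : P // y ≤ x} →₀ R :=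
  Finsupp.single (⟨e.1.1.1, e.2⟩ : {x : P // y ≤ x}) (1 : R)
    - Finsupp.single ⟨e.1.1.2, e.2.trans e.1.2.le⟩ 1

lemma edge_boundary_injective (htree : (SimpleGraph.hasse P).IsAcyclic) (y : P) :
    Function.Injective (Finsupp.linearCombination R (covGen R y)) := by
  classical
  have key : ∀ c, Finsupp.linearCombination R (covGen R y) c = 0 → c = 0 := by
    intro c hc
    by_contra hne
    obtain ⟨e0, he0⟩ := Finsupp.support_nonempty_iff.mpr hne
    obtain ⟨⟨⟨x0, z0⟩, h0⟩, hy0⟩ := e0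
    set G' := SimpleGraph.hasse P \ SimpleGraph.fromEdgeSet {s(x0, z0)} with hG'
    have hbridge : ¬ G'.Reachable x0 z0 := by
      have hb := (SimpleGraph.isAcyclic_iff_forall_adj_isBridge.mp htree)
        (show (SimpleGraph.hasse P).Adj x0 z0 from Or.inl h0)
      exact SimpleGraph.isBridge_iff.mp hb
    have hy0' : y ≤ z0 := hy0.trans h0.le
    let χ : {x : P // y ≤ x} → R := fun x => if G'.Reachable z0 x.1 then 1 else 0
    let L : ({x : P // y ≤ x} →₀ R) →ₗ[R] R := Finsupp.linearCombination R χ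
    have hLv : ∀ e : {e : Cov P // y ≤ e.1.1},
        L (covGen R y e) = χ ⟨e.1.1.1, e.2⟩ - χ ⟨e.1.1.2, e.2.trans e.1.2.le⟩ := by
      intro e
      show L (Finsupp.single _ 1 - Finsupp.single _ 1) = _
      rw [map_sub, Finsupp.linearCombination_single, Finsupp.linearCombination_single,
        one_smul, one_smul]
    have hsame : ∀ e : {e : Cov P // y ≤ e.1.1}, e ≠ ⟨⟨(x0, z0), h0⟩, hy0⟩ →
        L (covGen R y e) = 0 := by
      intro e hee
      have hpairne : e.1.1 ≠ (x0, z0) := by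
        intro hp
        exact hee (Subtype.ext (Subtype.ext hp))
      have hadj : G'.Adj e.1.1.1 e.1.1.2 := by
        refine ⟨Or.inl e.1.2, ?_⟩
        rw [SimpleGraph.fromEdgeSet_adj]
        rintro ⟨hmem, -⟩
        rw [Set.mem_singleton_iff, Sym2.eq_iff] at hmem
        rcases hmem with ⟨h1, h2⟩ | ⟨h1, h2⟩
        · exact hpairne (Prod.ext h1 h2)
        · have : z0 ⋖ x0 := by rw [← h1, ← h2]; exact e.1.2
          exact absurd this (fun hh => lt_asymm h0.lt hh.lt)
      have hiff : G'.Reachable z0 e.1.1.1 ↔ G'.Reachable z0 e.1.1.2 :=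
        ⟨fun hr => hr.trans hadj.reachable, fun hr => hr.trans hadj.symm.reachable⟩
      rw [hLv]
      show (if G'.Reachable z0 e.1.1.1 then (1:R) else 0)
        - (if G'.Reachable z0 e.1.1.2 then (1:R) else 0) = 0
      rw [if_congr hiff rfl rfl]
      exact sub_self _
    have hLe0 : L (covGen R y (⟨⟨(x0, z0), h0⟩, hy0⟩ : {e : Cov P // y ≤ e.1.1})) = -1 := by
      rw [hLv]
      show (if G'.Reachable z0 x0 then (1:R) else 0)
        - (if G'.Reachable z0 z0 then (1:R) else 0) = -1
      rw [if_neg (fun hr => hbridge hr.symm), if_pos (SimpleGraph.Reachable.refl z0)]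
      ring
    have hsum : L (Finsupp.linearCombination R (covGen R y) c)
        = c ⟨⟨(x0, z0), h0⟩, hy0⟩ * (-1) := by
      have hrep : (Finsupp.linearCombination R (covGen R y)) c
          = c.sum fun e r => r • covGen R y e := Finsupp.linearCombination_apply _ _
      rw [hrep, map_finsuppSum]
      rw [Finsupp.sum]
      rw [Finset.sum_congr rfl
        (fun e _ => by rw [map_smul, smul_eq_mul] :
          ∀ e ∈ c.support, L (c e • covGen R y e) = c e * L (covGen R y e))]
      rw [Finset.sum_eq_single (⟨⟨(x0, z0), h0⟩, hy0⟩ : {e : Cov P // y ≤ e.1.1})]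
      · rw [hLe0]
      · intro e _ hee
        rw [hsame e hee, mul_zero]
      · intro habs
        exact absurd he0 habs
    rw [hc, map_zero] at hsum
    have : c ⟨⟨(x0, z0), h0⟩, hy0⟩ = 0 := by
      have := hsum.symm
      simpa using this
    exact (Finsupp.mem_support_iff.mp he0) this
  intro a b hab
  have := key (a - b) (by rw [map_sub, hab, sub_self])
  exact sub_eq_zero.mp this

end Tree



section Free

variable {P}

/-- transport a linear map through `ULift` -/
def ulm {A B : Type} [AddCommGroup A] [Module R A] [AddCommGroup B] [Module R B]
    (g : A →ₗ[R] B) : ULift.{v} A →ₗ[R] ULift.{v} B :=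
  (ULift.moduleEquiv.symm.toLinearMap.comp g).comp ULift.moduleEquiv.toLinearMap

@[simp] lemma ulm_apply {A B : Type} [AddCommGroup A] [Module R A] [AddCommGroup B]
    [Module R B] (g : A →ₗ[R] B) (a : A) :
    ulm.{v} R g (ULift.up a) = ULift.up (g a) := rfl

lemma ulift_finsupp_hom_ext {S : Type} {M : Type v} [AddCommGroup M] [Module R M]
    {φ ψ : ULift.{v} (S →₀ R) →ₗ[R] M}
    (h : ∀ a : S, φ (ULift.up (Finsupp.single a 1)) = ψ (ULift.up (Finsupp.single a 1))) :
    φ = ψ := by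
  have h2 : φ.comp (ULift.moduleEquiv.symm.toLinearMap)
      = ψ.comp (ULift.moduleEquiv.symm.toLinearMap) := by
    apply Finsupp.lhom_ext
    intro a b
    have hb : (Finsupp.single a b : S →₀ R) = b • Finsupp.single a 1 := by
      rw [Finsupp.smul_single, smul_eq_mul, mul_one]
    show φ (ULift.up (Finsupp.single a b)) = ψ (ULift.up (Finsupp.single a b))
    rw [hb]
    rw [show (ULift.up ((b : R) • Finsupp.single a 1) : ULift.{v} (S →₀ R))
      = b • ULift.up (Finsupp.single a 1) from rfl]
    rw [map_smul, map_smul, h a]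
  apply LinearMap.ext
  intro x
  obtain ⟨xd⟩ := x
  exact congrArg (fun (f : (S →₀ R) →ₗ[R] M) => f xd) h2

variable (P)

/-- free module on the upper set of a point -/
def FreeUp : Pᵒᵖ ⥤ ModuleCat.{v} R where
  obj y := ModuleCat.of R (ULift.{v} ({x : P // y.unop ≤ x} →₀ R))
  map {y y'} f := ModuleCat.ofHom (ulm R (Finsupp.lmapDomain R R
    (fun p => ⟨p.1, (leOfHom f.unop).trans p.2⟩)))
  map_id := by
    intro y
    apply ModuleCat.hom_ext
    apply ulift_finsupp_hom_ext R
    intro p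
    show ULift.up (Finsupp.mapDomain _ (Finsupp.single p 1)) = ULift.up (Finsupp.single p 1)
    rw [Finsupp.mapDomain_single]
  map_comp := by
    intro y y' y'' f g
    apply ModuleCat.hom_ext
    apply ulift_finsupp_hom_ext R
    intro p
    show ULift.up (Finsupp.mapDomain _ (Finsupp.single p 1))
      = ULift.up (Finsupp.mapDomain _ (Finsupp.mapDomain _ (Finsupp.single p 1)))
    rw [Finsupp.mapDomain_single, Finsupp.mapDomain_single, Finsupp.mapDomain_single]

/-- free module on covering pairs inside the upper set of a point -/
def FreeUpE : Pᵒᵖ ⥤ ModuleCat.{v} R where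
  obj y := ModuleCat.of R (ULift.{v} ({e : Cov P // y.unop ≤ e.1.1} →₀ R))
  map {y y'} f := ModuleCat.ofHom (ulm R (Finsupp.lmapDomain R R
    (fun p => ⟨p.1, (leOfHom f.unop).trans p.2⟩)))
  map_id := by
    intro y
    apply ModuleCat.hom_ext
    apply ulift_finsupp_hom_ext R
    intro p
    show ULift.up (Finsupp.mapDomain _ (Finsupp.single p 1)) = ULift.up (Finsupp.single p 1)
    rw [Finsupp.mapDomain_single]
  map_comp := by
    intro y y' y'' f g
    apply ModuleCat.hom_ext
    apply ulift_finsupp_hom_ext R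
    intro p
    show ULift.up (Finsupp.mapDomain _ (Finsupp.single p 1))
      = ULift.up (Finsupp.mapDomain _ (Finsupp.mapDomain _ (Finsupp.single p 1)))
    rw [Finsupp.mapDomain_single, Finsupp.mapDomain_single, Finsupp.mapDomain_single]

/-- the boundary map between the free functors -/
def iota01 : FreeUpE.{v} P R ⟶ FreeUp.{v} P R where
  app y := ModuleCat.ofHom (ulm R (Finsupp.linearCombination R (covGen R y.unop)))
  naturality := by
    intro y y' f
    apply ModuleCat.hom_ext
    apply ulift_finsupp_hom_ext R
    intro e
    show ULift.up ((Finsupp.linearCombination R (covGen R y'.unop))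
        (Finsupp.mapDomain (fun p : {e : Cov P // y.unop ≤ e.1.1} =>
          (⟨p.1, (leOfHom f.unop).trans p.2⟩ : {e : Cov P // y'.unop ≤ e.1.1}))
          (Finsupp.single e 1)))
      = ULift.up ((Finsupp.lmapDomain R R (fun p : {x : P // y.unop ≤ x} =>
          (⟨p.1, (leOfHom f.unop).trans p.2⟩ : {x : P // y'.unop ≤ x})))
          ((Finsupp.linearCombination R (covGen R y.unop)) (Finsupp.single e 1)))
    rw [Finsupp.mapDomain_single, Finsupp.linearCombination_single,
      Finsupp.linearCombination_single, one_smul, one_smul]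
    unfold covGen
    rw [map_sub, Finsupp.lmapDomain_apply, Finsupp.lmapDomain_apply,
      Finsupp.mapDomain_single, Finsupp.mapDomain_single]

lemma iota01_mono (htree : (SimpleGraph.hasse P).IsAcyclic) :
    Mono (iota01.{v} P R) := by
  have hmono : ∀ y : Pᵒᵖ, Mono ((iota01.{v} P R).app y) := by
    intro y
    rw [ModuleCat.mono_iff_injective]
    intro a b hab
    obtain ⟨ad⟩ := a
    obtain ⟨bd⟩ := b
    have : (Finsupp.linearCombination R (covGen R y.unop)) ad
        = (Finsupp.linearCombination R (covGen R y.unop)) bd :=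
      congrArg ULift.down hab
    exact congrArg ULift.up (edge_boundary_injective R htree y.unop this)
  haveI := hmono
  exact NatTrans.mono_of_mono_app _

/-- the natural map out of the edge functor determined by a family indexed by edges -/
def tauNat (I : Pᵒᵖ ⥤ ModuleCat.{v} R) (t : ∀ e : Cov P, I.obj (op e.1.1)) :
    FreeUpE.{v} P R ⟶ I where
  app y := ModuleCat.ofHom ((Finsupp.linearCombination R
      (fun e : {e : Cov P // y.unop ≤ e.1.1} =>
        (I.map (homOfLE e.2).op (t e.1) : I.obj y))).comp
      ULift.moduleEquiv.toLinearMap)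
  naturality := by
    intro y y' f
    apply ModuleCat.hom_ext
    apply ulift_finsupp_hom_ext R
    intro e
    show (Finsupp.linearCombination R
        (fun e : {e : Cov P // y'.unop ≤ e.1.1} =>
          (I.map (homOfLE e.2).op (t e.1) : I.obj y')))
        (Finsupp.mapDomain (fun p : {e : Cov P // y.unop ≤ e.1.1} =>
          (⟨p.1, (leOfHom f.unop).trans p.2⟩ : {e : Cov P // y'.unop ≤ e.1.1}))
          (Finsupp.single e 1))
      = I.map f ((Finsupp.linearCombination R
          (fun e : {e : Cov P // y.unop ≤ e.1.1} =>
            (I.map (homOfLE e.2).op (t e.1) : I.obj y))) (Finsupp.single e 1))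
    rw [Finsupp.mapDomain_single, Finsupp.linearCombination_single,
      Finsupp.linearCombination_single, one_smul, one_smul]
    show I.map (homOfLE ((leOfHom f.unop).trans e.2)).op (t e.1)
      = I.map f (I.map (homOfLE e.2).op (t e.1))
    rw [Subsingleton.elim ((homOfLE ((leOfHom f.unop).trans e.2)).op)
      ((homOfLE e.2).op ≫ f), I.map_comp]
    rfl

lemma alphaApp_surjective (htree : (SimpleGraph.hasse P).IsAcyclic)
    (I : Pᵒᵖ ⥤ ModuleCat.{v} R) [Injective I] (t : (Phi1 P R).obj I) :
    ∃ s : (Phi0 P R).obj I, alphaApp P R I s = t := by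
  haveI := iota01_mono P R htree
  let σ : FreeUp.{v} P R ⟶ I := Injective.factorThru (tauNat P R I t) (iota01 P R)
  have hfac : iota01 P R ≫ σ = tauNat P R I t := Injective.comp_factorThru _ _
  refine ⟨fun x => σ.app (op x) (ULift.up (Finsupp.single ⟨x, le_rfl⟩ 1)), ?_⟩
  funext e
  rw [alphaApp_apply]
  obtain ⟨⟨x, z⟩, hcov⟩ := e
  show σ.app (op x) (ULift.up (Finsupp.single ⟨x, le_rfl⟩ 1))
      - I.map (homOfLE hcov.le).op (σ.app (op z) (ULift.up (Finsupp.single ⟨z, le_rfl⟩ 1)))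
    = t ⟨(x, z), hcov⟩
  have hnat := congrArg
    (fun (g : (FreeUp.{v} P R).obj (op z) ⟶ I.obj (op x)) =>
      g (ULift.up (Finsupp.single ⟨z, le_rfl⟩ 1)))
    (σ.naturality ((homOfLE hcov.le).op))
  replace hnat : σ.app (op x) ((FreeUp.{v} P R).map ((homOfLE hcov.le).op)
      (ULift.up (Finsupp.single ⟨z, le_rfl⟩ 1)))
      = I.map (homOfLE hcov.le).op (σ.app (op z) (ULift.up (Finsupp.single ⟨z, le_rfl⟩ 1))) :=
    hnat
  have hmap : (FreeUp.{v} P R).map ((homOfLE hcov.le).op)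
      (ULift.up (Finsupp.single ⟨z, le_rfl⟩ 1))
      = ULift.up (Finsupp.single ⟨z, hcov.le⟩ 1) := by
    show ULift.up (Finsupp.mapDomain _ (Finsupp.single _ 1)) = _
    rw [Finsupp.mapDomain_single]
  replace hnat := (congrArg (fun v => σ.app (op x) v) hmap).symm.trans hnat
  -- hnat : σ.app (op x) (up (single ⟨z, hcov.le⟩ 1)) = I.map _ (σ.app (op z) (up (single ⟨z,le_rfl⟩ 1)))
  rw [← hnat]
  erw [← map_sub]
  have hgen : (ULift.up (Finsupp.single (⟨x, le_rfl⟩ : {w : P // x ≤ w}) (1:R))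
        - ULift.up (Finsupp.single ⟨z, hcov.le⟩ 1))
      = (iota01.{v} P R).app (op x)
          (ULift.up (Finsupp.single (⟨⟨(x, z), hcov⟩, le_rfl⟩ :
            {e : Cov P // x ≤ e.1.1}) 1)) := by
    show _ = ULift.up ((Finsupp.linearCombination R (covGen R x)) (Finsupp.single _ 1))
    rw [Finsupp.linearCombination_single, one_smul]
    rfl
  erw [hgen]
  have h5 : σ.app (op x) ((iota01.{v} P R).app (op x)
        (ULift.up (Finsupp.single (⟨⟨(x, z), hcov⟩, le_rfl⟩ :
          {e : Cov P // x ≤ e.1.1}) 1)))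
      = (tauNat P R I t).app (op x)
        (ULift.up (Finsupp.single (⟨⟨(x, z), hcov⟩, le_rfl⟩ :
          {e : Cov P // x ≤ e.1.1}) 1)) :=
    congrArg (fun (η : FreeUpE.{v} P R ⟶ I) => η.app (op x)
      (ULift.up (Finsupp.single (⟨⟨(x, z), hcov⟩, le_rfl⟩ :
        {e : Cov P // x ≤ e.1.1}) 1))) hfac
  rw [h5]
  have h6 : (tauNat P R I t).app (op x)
      (ULift.up (Finsupp.single (⟨⟨(x, z), hcov⟩, le_rfl⟩ :
        {e : Cov P // x ≤ e.1.1}) 1))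
      = I.map (homOfLE (le_refl x)).op (t ⟨(x, z), hcov⟩) := by
    show (Finsupp.linearCombination R _) (Finsupp.single _ 1) = _
    rw [Finsupp.linearCombination_single, one_smul]
  rw [h6, Subsingleton.elim ((homOfLE (le_refl x)).op) (𝟙 (op x)), I.map_id]
  rfl

end Free


section Mapped

instance : (Phi0.{v} P R).Additive where
  map_add := by
    intros
    apply ModuleCat.hom_ext; apply LinearMap.ext; intro s
    funext x
    rfl

instance : (Phi1.{v} P R).Additive where
  map_add := by
    intros
    apply ModuleCat.hom_ext; apply LinearMap.ext; intro s
    funext e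
    rfl

lemma iotaApp_comp_alphaApp (F : Pᵒᵖ ⥤ ModuleCat.{v} R) :
    iotaApp P R F ≫ alphaApp P R F = 0 := by
  have h := congrArg (fun (η : (lim (J := Pᵒᵖ) (C := ModuleCat.{v} R)) ⟶ Phi1.{v} P R)
    => η.app F) (iota_comp_alpha P R)
  exact h

lemma phi0_mapped_exactAt (K : CochainComplex (Pᵒᵖ ⥤ ModuleCat.{v} R) ℕ)
    (hK : ∀ m : ℕ, K.ExactAt (m+1)) (n : ℕ) :
    (((Phi0.{v} P R).mapHomologicalComplex (ComplexShape.up ℕ)).obj K).ExactAt (n+1) := by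
  rw [HomologicalComplex.exactAt_iff' _ n (n+1) (n+2) (by simp)
    (by simp only [CochainComplex.next]; rfl)]
  rw [ShortComplex.moduleCat_exact_iff]
  intro s hs
  have hKn := (HomologicalComplex.exactAt_iff' K n (n+1) (n+2) (by simp)
    (by simp only [CochainComplex.next]; rfl)).mp (hK n)
  have hstep : ∀ x : P, ∃ w : (K.X n).obj (op x),
      (K.d n (n+1)).app (op x) w = s x := by
    intro x
    have hevx := hKn.map ((evaluation Pᵒᵖ (ModuleCat.{v} R)).obj (op x))
    rw [ShortComplex.moduleCat_exact_iff] at hevx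
    exact hevx (s x) (congrFun hs x)
  choose t ht using hstep
  exact ⟨t, funext ht⟩

lemma phi1_mapped_exactAt (K : CochainComplex (Pᵒᵖ ⥤ ModuleCat.{v} R) ℕ)
    (hK : ∀ m : ℕ, K.ExactAt (m+1)) (n : ℕ) :
    (((Phi1.{v} P R).mapHomologicalComplex (ComplexShape.up ℕ)).obj K).ExactAt (n+1) := by
  rw [HomologicalComplex.exactAt_iff' _ n (n+1) (n+2) (by simp)
    (by simp only [CochainComplex.next]; rfl)]
  rw [ShortComplex.moduleCat_exact_iff]
  intro s hs
  have hKn := (HomologicalComplex.exactAt_iff' K n (n+1) (n+2) (by simp)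
    (by simp only [CochainComplex.next]; rfl)).mp (hK n)
  have hstep : ∀ e : Cov P, ∃ w : (K.X n).obj (op e.1.1),
      (K.d n (n+1)).app (op e.1.1) w = s e := by
    intro e
    have hevx := hKn.map ((evaluation Pᵒᵖ (ModuleCat.{v} R)).obj (op e.1.1))
    rw [ShortComplex.moduleCat_exact_iff] at hevx
    exact hevx (s e) (congrFun hs e)
  choose t ht using hstep
  exact ⟨t, funext ht⟩

end Mapped

end TreeLim


/-- If `P` is a filtered tree (a filtered poset whose Hasse diagram is acyclic), then
`H^k(P; F) = 0` for every `k > 1`. -/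
theorem higherLim_isZero_of_tree
    (P : Type) [PartialOrder P] (d : P → ℕ) (hd : StrictMono d)
    (htree : (SimpleGraph.hasse P).IsAcyclic)
    (R : Type) [CommRing R] [EnoughInjectives (Pᵒᵖ ⥤ ModuleCat R)]
    (F : Pᵒᵖ ⥤ ModuleCat R)
    (k : ℕ) (hk : 1 < k) :
    IsZero (higherLim P R k F) := by
  obtain ⟨j, rfl⟩ : ∃ j, k = j + 2 := ⟨k - 2, by omega⟩
  obtain ⟨I⟩ := HasInjectiveResolution.out (Z := F)
  refine IsZero.of_iso ?_
    (I.isoRightDerivedObj (lim (J := Pᵒᵖ) (C := ModuleCat R)) (j+2))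
  set K := I.cocomplex with hKdef
  let S : ShortComplex (CochainComplex (ModuleCat R) ℕ) := ShortComplex.mk
    ((NatTrans.mapHomologicalComplex (iotaNat P R) (ComplexShape.up ℕ)).app K)
    ((NatTrans.mapHomologicalComplex (alphaNat P R) (ComplexShape.up ℕ)).app K)
    (by
      ext n x
      have h := congrArg
        (fun (g : (lim (J := Pᵒᵖ) (C := ModuleCat R)).obj (K.X n) ⟶ (Phi1 P R).obj (K.X n))
          => g x) (iotaApp_comp_alphaApp P R (K.X n))
      exact h)
  have hS : S.ShortExact := by
    rw [HomologicalComplex.shortExact_iff_degreewise_shortExact]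
    intro n
    haveI : Injective (K.X n) := I.injective n
    have hmono : Mono ((S.map (HomologicalComplex.eval _ _ n)).f) := by
      rw [ModuleCat.mono_iff_injective]
      exact iotaApp_injective (K.X n)
    have hepi : Epi ((S.map (HomologicalComplex.eval _ _ n)).g) := by
      rw [ModuleCat.epi_iff_surjective]
      intro tEl
      exact alphaApp_surjective P R htree (K.X n) tEl
    refine { exact := ?_, mono_f := hmono, epi_g := hepi }
    rw [ShortComplex.moduleCat_exact_iff]
    intro sEl hsEl
    exact alpha_ker_sub_range hd (K.X n) sEl hsEl
  have hA : (((Phi0 P R).mapHomologicalComplex (ComplexShape.up ℕ)).obj K).ExactAt (j+2) :=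
    phi0_mapped_exactAt P R K (fun m => I.cocomplex_exactAt_succ m) (j+1)
  have hB : (((Phi1 P R).mapHomologicalComplex (ComplexShape.up ℕ)).obj K).ExactAt (j+1) :=
    phi1_mapped_exactAt P R K (fun m => I.cocomplex_exactAt_succ m) j
  have h1 : IsZero (S.X₃.homology (j+1)) :=
    (HomologicalComplex.exactAt_iff_isZero_homology _ _).mp hB
  have h3 : IsZero (S.X₂.homology (j+2)) :=
    (HomologicalComplex.exactAt_iff_isZero_homology _ _).mp hA
  have hles := hS.homology_exact₁ (j+1) (j+2) rfl
  have hz := hles.isZero_X₂ (h1.eq_of_src _ _) (h3.eq_of_tgt _ _)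
  exact hz
end
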